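/- Let g(s) = a₀ + a₁ s^{α₁} + ⋯ + a_N s^{α_N} for s ≥ 0, with strictly positive coefficients a₀, …, a_N and exponents 0 < α₁ < ⋯ < α_N, let s(ξ) be the unique non-negative solution of s·g(s) = ξ, and set K₁(ξ) = 1/g(s(ξ)). Then there exist constants d₁, d₂ with 0 < d₁ ≤ d₂ such that d₁/(1 + ξ)^a ≤ K₁(ξ) ≤ d₂/(1 + ξ)^a for all ξ ≥ 0, where a = α_N/(α_N + 1) ∈ (0, 1). -/

import Mathlib

open Real Set

set_option maxHeartbeats 1000000 in
/-- Two-sided power-law bound for the Forchheimer coefficient `K₁(ξ) = 1/g(s(ξ))`: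
there exist `0 < d₁ ≤ d₂` with `d₁/(1+ξ)^a ≤ K₁(ξ) ≤ d₂/(1+ξ)^a` for all `ξ ≥ 0`,
where `a = α_N/(α_N + 1) ∈ (0,1)`. -/
theorem forchheimer_K1_two_sided_bound (N : ℕ) (hN : 1 ≤ N)
    (a α : Fin (N + 1) → ℝ)
    (ha : ∀ i, 0 < a i) (hα0 : α 0 = 0) (hαmono : StrictMono α)
    (g : ℝ → ℝ) (hg : ∀ s : ℝ, g s = ∑ i, a i * s ^ α i)
    (S : ℝ → ℝ)
    (hS : ∀ ξ ∈ Ici (0 : ℝ), 0 ≤ S ξ ∧ S ξ * g (S ξ) = ξ ∧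
      ∀ t : ℝ, 0 ≤ t → t * g t = ξ → t = S ξ)
    (K₁ : ℝ → ℝ) (hK : ∀ ξ : ℝ, K₁ ξ = 1 / g (S ξ)) :
    α (Fin.last N) / (α (Fin.last N) + 1) ∈ Ioo (0 : ℝ) 1 ∧
      ∃ d₁ d₂ : ℝ, 0 < d₁ ∧ d₁ ≤ d₂ ∧ ∀ ξ : ℝ, 0 ≤ ξ →
        d₁ / (1 + ξ) ^ (α (Fin.last N) / (α (Fin.last N) + 1)) ≤ K₁ ξ ∧
          K₁ ξ ≤ d₂ / (1 + ξ) ^ (α (Fin.last N) / (α (Fin.last N) + 1)) := by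
  set β := α (Fin.last N) with hβdef
  have hlastpos : (0 : Fin (N + 1)) < Fin.last N := by
    rw [Fin.lt_def]
    simpa using (show 0 < N by omega)
  have hβ : 0 < β := by
    have := hαmono hlastpos
    rwa [hα0] at this
  have hαnn : ∀ i, 0 ≤ α i := fun i => by
    have := hαmono.monotone (Fin.zero_le i); rwa [hα0] at this
  have hαle : ∀ i, α i ≤ β := fun i => hαmono.monotone (Fin.le_last i)
  set A := ∑ i, a i with hAdef
  have hApos : 0 < A := Finset.sum_pos (fun i _ => ha i) Finset.univ_nonempty
  set m := min (a 0) (a (Fin.last N)) with hmdef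
  have hmpos : 0 < m := lt_min (ha 0) (ha _)
  have he : (0:ℝ) < β + 1 := by linarith
  have haexp0 : 0 < β / (β + 1) := div_pos hβ he
  have haexp1 : β / (β + 1) < 1 := (div_lt_one he).mpr (by linarith)
  have hmul : (β + 1) * (β / (β + 1)) = β := by field_simp
  -- pointwise power bounds
  have hpow_le : ∀ s : ℝ, 0 ≤ s → ∀ p q : ℝ, 0 ≤ p → p ≤ q → s ^ p ≤ 1 + s ^ q := by
    intro s hs p q hp hpq
    rcases le_total s 1 with h | h
    · have h1 : s ^ p ≤ 1 := Real.rpow_le_one hs h hp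
      have h2 : 0 ≤ s ^ q := Real.rpow_nonneg hs q
      linarith
    · have h1 : s ^ p ≤ s ^ q := Real.rpow_le_rpow_of_exponent_le h hpq
      linarith
  have one_le_rp : ∀ x : ℝ, 1 ≤ x → ∀ p : ℝ, 0 ≤ p → (1:ℝ) ≤ x ^ p := by
    intro x hx p hp
    calc (1:ℝ) = 1 ^ p := (Real.one_rpow p).symm
      _ ≤ x ^ p := Real.rpow_le_rpow zero_le_one hx hp
  have two_bound : ∀ s : ℝ, 0 ≤ s → ∀ p : ℝ, 0 ≤ p →
      (1 + s) ^ p ≤ 2 ^ p * (1 + s ^ p) := by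
    intro s hs p hp
    have h3 : (0:ℝ) < 2 ^ p := Real.rpow_pos_of_pos two_pos p
    rcases le_total s 1 with h | h
    · have h1 : (1 + s) ^ p ≤ 2 ^ p :=
        Real.rpow_le_rpow (by linarith) (by linarith) hp
      have h2 : 0 ≤ s ^ p := Real.rpow_nonneg hs p
      nlinarith
    · have h1 : (1 + s) ^ p ≤ (2 * s) ^ p :=
        Real.rpow_le_rpow (by linarith) (by linarith) hp
      rw [Real.mul_rpow (by norm_num) hs] at h1
      nlinarith
  have rev_bound : ∀ s : ℝ, 0 ≤ s → ∀ p : ℝ, 0 ≤ p → 1 + s ^ p ≤ 2 * (1 + s) ^ p := by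
    intro s hs p hp
    have h1 : (1:ℝ) ≤ (1 + s) ^ p := one_le_rp _ (by linarith) _ hp
    have h2 : s ^ p ≤ (1 + s) ^ p := Real.rpow_le_rpow hs (by linarith) hp
    linarith
  -- bounds on g on the nonnegative axis
  have hg_ub : ∀ s : ℝ, 0 ≤ s → g s ≤ A * (1 + s ^ β) := by
    intro s hs
    rw [hg]
    calc ∑ i, a i * s ^ α i ≤ ∑ i, a i * (1 + s ^ β) :=
          Finset.sum_le_sum fun i _ =>
            mul_le_mul_of_nonneg_left (hpow_le s hs _ _ (hαnn i) (hαle i)) (ha i).le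
      _ = A * (1 + s ^ β) := by rw [hAdef, ← Finset.sum_mul]
  have hg_lb : ∀ s : ℝ, 0 ≤ s → m * (1 + s ^ β) ≤ g s := by
    intro s hs
    rw [hg]
    have hne : (0 : Fin (N+1)) ≠ Fin.last N := ne_of_lt hlastpos
    have h := Finset.sum_le_sum_of_subset_of_nonneg (f := fun i => a i * s ^ α i)
      (Finset.subset_univ ({0, Fin.last N} : Finset (Fin (N+1))))
      (fun i _ _ => mul_nonneg (ha i).le (Real.rpow_nonneg hs _))
    rw [Finset.sum_pair hne, hα0, Real.rpow_zero, mul_one] at h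
    have h0 : m ≤ a 0 := min_le_left _ _
    have hN' : m ≤ a (Fin.last N) := min_le_right _ _
    have hsp : 0 ≤ s ^ β := Real.rpow_nonneg hs β
    nlinarith
  have hg_pos : ∀ s : ℝ, 0 ≤ s → 0 < g s := fun s hs =>
    lt_of_lt_of_le (mul_pos hmpos (by positivity)) (hg_lb s hs)
  -- constants
  set cA : ℝ := (min 1 m / 2 ^ (β+1)) ^ (β / (β + 1)) with hcAdef
  set cB : ℝ := (1 + 2 * A) ^ (β / (β + 1)) with hcBdef
  have hcApos : 0 < cA := by
    apply Real.rpow_pos_of_pos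
    have : (0:ℝ) < 2 ^ (β+1) := Real.rpow_pos_of_pos two_pos _
    exact div_pos (lt_min one_pos hmpos) this
  have hcBpos : 0 < cB := Real.rpow_pos_of_pos (by linarith) _
  set d₁ : ℝ := cA / (2 * A) with hd₁def
  set d₂ : ℝ := cB * 2 ^ β / m with hd₂def
  have hd₁pos : 0 < d₁ := div_pos hcApos (by linarith)
  have h2βpos : (0:ℝ) < 2 ^ β := Real.rpow_pos_of_pos two_pos β
  have hd₂pos : 0 < d₂ := div_pos (mul_pos hcBpos h2βpos) hmpos
  -- main estimate
  have main : ∀ ξ : ℝ, 0 ≤ ξ →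
      d₁ / (1 + ξ) ^ (β / (β + 1)) ≤ K₁ ξ ∧ K₁ ξ ≤ d₂ / (1 + ξ) ^ (β / (β + 1)) := by
    intro ξ hξ
    obtain ⟨hs, hsg, -⟩ := hS ξ hξ
    set s := S ξ with hsdef
    have hx : (1:ℝ) ≤ 1 + s := by linarith
    have hx0 : (0:ℝ) ≤ 1 + s := by linarith
    have hss : s * s ^ β = s ^ (β + 1) := by
      rcases eq_or_lt_of_le hs with h | h
      · rw [← h, Real.zero_rpow (by positivity : β + 1 ≠ 0),
          Real.zero_rpow (ne_of_gt hβ), mul_zero]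
      · rw [Real.rpow_add_one h.ne', mul_comm]
    have hsp1 : 0 ≤ s ^ (β + 1) := Real.rpow_nonneg hs _
    have hspβ : 0 ≤ s ^ β := Real.rpow_nonneg hs _
    -- 1 + ξ lower bound in terms of (1+s)^(β+1)
    have hξ_lb : min 1 m / 2 ^ (β+1) * (1 + s) ^ (β + 1) ≤ 1 + ξ := by
      have h1 : m * s ^ (β + 1) ≤ ξ := by
        have h := mul_le_mul_of_nonneg_left (hg_lb s hs) hs
        rw [hsg] at h
        have e1 : s * (m * (1 + s ^ β)) = m * s + m * s ^ (β + 1) := by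
          rw [← hss]; ring
        rw [e1] at h
        have : 0 ≤ m * s := mul_nonneg hmpos.le hs
        linarith
      have h2 : min 1 m * (1 + s ^ (β + 1)) ≤ 1 + ξ := by
        have hm1 : min 1 m ≤ 1 := min_le_left _ _
        have hm2 : min 1 m * s ^ (β + 1) ≤ m * s ^ (β + 1) :=
          mul_le_mul_of_nonneg_right (min_le_right _ _) hsp1
        nlinarith
      have h3 : (1 + s) ^ (β + 1) ≤ 2 ^ (β+1) * (1 + s ^ (β + 1)) :=
        two_bound s hs _ (by linarith)
      have h2β : (0:ℝ) < 2 ^ (β+1) := Real.rpow_pos_of_pos two_pos _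
      have hmm : (0:ℝ) < min 1 m := lt_min one_pos hmpos
      calc min 1 m / 2 ^ (β+1) * (1 + s) ^ (β + 1)
          ≤ min 1 m / 2 ^ (β+1) * (2 ^ (β+1) * (1 + s ^ (β + 1))) := by
            apply mul_le_mul_of_nonneg_left h3 (by positivity)
        _ = min 1 m * (1 + s ^ (β + 1)) := by field_simp
        _ ≤ 1 + ξ := h2
    -- 1 + ξ upper bound
    have hξ_ub : 1 + ξ ≤ (1 + 2 * A) * (1 + s) ^ (β + 1) := by
      have h1 : ξ ≤ A * s + A * s ^ (β + 1) := by
        have h := mul_le_mul_of_nonneg_left (hg_ub s hs) hs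
        rw [hsg] at h
        have e1 : s * (A * (1 + s ^ β)) = A * s + A * s ^ (β + 1) := by
          rw [← hss]; ring
        linarith [e1 ▸ h]
      have h2 : (1:ℝ) ≤ (1 + s) ^ (β + 1) := one_le_rp _ hx _ (by linarith)
      have h3 : s ≤ (1 + s) ^ (β + 1) := by
        calc s ≤ 1 + s := by linarith
          _ = (1 + s) ^ (1:ℝ) := (Real.rpow_one _).symm
          _ ≤ (1 + s) ^ (β + 1) := Real.rpow_le_rpow_of_exponent_le hx (by linarith)
      have h4 : s ^ (β + 1) ≤ (1 + s) ^ (β + 1) :=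
        Real.rpow_le_rpow hs (by linarith) (by linarith)
      have h3A := mul_le_mul_of_nonneg_left h3 hApos.le
      have h4A := mul_le_mul_of_nonneg_left h4 hApos.le
      nlinarith [h3A, h4A, h2]
    -- raise to power β/(β+1)
    have hxe : ((1 + s) ^ (β + 1)) ^ (β / (β + 1)) = (1 + s) ^ β := by
      rw [← Real.rpow_mul hx0, hmul]
    have hP_lb : cA * (1 + s) ^ β ≤ (1 + ξ) ^ (β / (β + 1)) := by
      have := Real.rpow_le_rpow (by positivity) hξ_lb haexp0.le
      rwa [Real.mul_rpow (by positivity) (by positivity), hxe] at this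
    have hP_ub : (1 + ξ) ^ (β / (β + 1)) ≤ cB * (1 + s) ^ β := by
      have := Real.rpow_le_rpow (by linarith) hξ_ub haexp0.le
      rwa [Real.mul_rpow (by linarith) (by positivity), hxe] at this
    -- g bounds in terms of (1+ξ)^a
    have hgs_pos : 0 < g s := hg_pos s hs
    have hxβpos : (0:ℝ) < (1 + s) ^ β := Real.rpow_pos_of_pos (by linarith) _
    have hPpos : (0:ℝ) < (1 + ξ) ^ (β / (β + 1)) := Real.rpow_pos_of_pos (by linarith) _
    have hg_high : g s ≤ (2 * A / cA) * (1 + ξ) ^ (β / (β + 1)) := by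
      have h1 : g s ≤ 2 * A * (1 + s) ^ β := by
        have hr := mul_le_mul_of_nonneg_left (rev_bound s hs β hβ.le) hApos.le
        have h2 := hg_ub s hs
        nlinarith [hr, h2]
      calc g s ≤ 2 * A * (1 + s) ^ β := h1
        _ = (2 * A / cA) * (cA * (1 + s) ^ β) := by field_simp
        _ ≤ (2 * A / cA) * (1 + ξ) ^ (β / (β + 1)) := by
            apply mul_le_mul_of_nonneg_left hP_lb (by positivity)
    have hg_low : (m / 2 ^ β / cB) * (1 + ξ) ^ (β / (β + 1)) ≤ g s := by
      have h1 : m / 2 ^ β * (1 + s) ^ β ≤ g s := by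
        have h2 := two_bound s hs β hβ.le
        have h3 := hg_lb s hs
        have : m / 2 ^ β * (1 + s) ^ β ≤ m / 2 ^ β * (2 ^ β * (1 + s ^ β)) :=
          mul_le_mul_of_nonneg_left h2 (by positivity)
        have h4 : m / 2 ^ β * (2 ^ β * (1 + s ^ β)) = m * (1 + s ^ β) := by
          field_simp
        linarith [h4 ▸ this]
      calc (m / 2 ^ β / cB) * (1 + ξ) ^ (β / (β + 1))
          ≤ (m / 2 ^ β / cB) * (cB * (1 + s) ^ β) := by
            apply mul_le_mul_of_nonneg_left hP_ub (by positivity)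
        _ = m / 2 ^ β * (1 + s) ^ β := by field_simp
        _ ≤ g s := h1
    -- conclude for K₁
    rw [hK, ← hsdef]
    constructor
    · have h := one_div_le_one_div_of_le hgs_pos hg_high
      have heq : (1:ℝ) / (2 * A / cA * (1 + ξ) ^ (β / (β + 1)))
          = cA / (2 * A) / (1 + ξ) ^ (β / (β + 1)) := by
        have hA0 : (A : ℝ) ≠ 0 := ne_of_gt hApos
        have hcA0 : cA ≠ 0 := ne_of_gt hcApos
        have hP0 : (1 + ξ) ^ (β / (β + 1)) ≠ 0 := ne_of_gt hPpos
        field_simp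
      rw [heq] at h
      exact h
    · have hlow_pos : 0 < (m / 2 ^ β / cB) * (1 + ξ) ^ (β / (β + 1)) := by positivity
      have h := one_div_le_one_div_of_le hlow_pos hg_low
      calc 1 / g s ≤ 1 / ((m / 2 ^ β / cB) * (1 + ξ) ^ (β / (β + 1))) := h
        _ = d₂ / (1 + ξ) ^ (β / (β + 1)) := by
            rw [hd₂def]
            field_simp
  refine ⟨⟨haexp0, haexp1⟩, d₁, d₂, hd₁pos, ?_, main⟩
  have h0 := main 0 le_rfl
  rw [show (1:ℝ) + 0 = 1 by norm_num, Real.one_rpow, div_one, div_one] at h0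
  exact le_trans h0.1 h0.2
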